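/- Under the hypotheses of Lemma 1 (coherent states |z⟩ = W(z)|0⟩ over a group G with compact open subgroup H and K = H × A(Ĝ,H) maximal isotropic, |0⟩ the K-invariant vacuum), |⟨z|z'⟩| = 1 if z − z' ∈ K and |⟨z|z'⟩| = 0 otherwise. -/

import Mathlib

open scoped Classical

open ContinuousLinearMap

/-- The annihilator of a subgroup `H` in the Pontryagin dual of `G`. -/
def annihilator {G : Type*} [CommGroup G] [TopologicalSpace G] [IsTopologicalGroup G]
    (H : Subgroup G) : Subgroup (PontryaginDual G) where
  carrier := {χ | ∀ h ∈ H, χ h = 1}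
  one_mem' := by intro h hh; rfl
  mul_mem' := by intro χ ψ hχ hψ h hh; show χ h * ψ h = 1; rw [hχ h hh, hψ h hh, mul_one]
  inv_mem' := by intro χ hχ h hh; show (χ h)⁻¹ = 1; rw [hχ h hh, inv_one]

/-- The symplectic cocycle `ω((g,λ),(g',λ')) = λ(g')·conj(λ'(g))` on `F = G × Ĝ`. -/
noncomputable def omegaCocycle {G : Type*} [CommGroup G] [TopologicalSpace G] [IsTopologicalGroup G]
    (z z' : G × PontryaginDual G) : ℂ :=
  (z.2 z'.1 : ℂ) * (starRingEnd ℂ) (z'.2 z.1 : ℂ)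

lemma omegaCocycle_abs {G : Type*} [CommGroup G] [TopologicalSpace G] [IsTopologicalGroup G]
    (z u : G × PontryaginDual G) : ‖omegaCocycle z u‖ = 1 := by
  unfold omegaCocycle
  rw [norm_mul, Complex.norm_conj, Circle.norm_coe, Circle.norm_coe, mul_one]

lemma omegaCocycle_mul {G : Type*} [CommGroup G] [TopologicalSpace G] [IsTopologicalGroup G]
    (z w u : G × PontryaginDual G) :
    omegaCocycle (z * w) u = omegaCocycle z u * omegaCocycle w u := by
  unfold omegaCocycle
  have h1 : (z * w).2 u.1 = z.2 u.1 * w.2 u.1 := rfl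
  have h2 : u.2 (z * w).1 = u.2 z.1 * u.2 w.1 := by
    have : (z * w).1 = z.1 * w.1 := rfl
    rw [this, map_mul]
  rw [h1, h2, Circle.coe_mul, Circle.coe_mul, map_mul]
  ring

/-- Lemma 1: coherent states `|z⟩ = W(z)|0⟩` are orthogonal for `z/z' ∉ K` and differ
only by a phase for `z/z' ∈ K`. -/
theorem coherent_state_overlap
    {G : Type*} [CommGroup G] [TopologicalSpace G] [IsTopologicalGroup G]
    {Hsp : Type*} [NormedAddCommGroup Hsp] [InnerProductSpace ℂ Hsp] [CompleteSpace Hsp]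
    (H : Subgroup G) (hHopen : IsOpen (H : Set G)) (hHcpt : IsCompact (H : Set G))
    (K : Subgroup (G × PontryaginDual G)) (hK : K = H.prod (annihilator H))
    (W : G × PontryaginDual G → Hsp →L[ℂ] Hsp)
    (hWunit : ∀ z, (adjoint (W z)).comp (W z) = 1 ∧ (W z).comp (adjoint (W z)) = 1)
    (hcomm : ∀ z z', (W z).comp (W z') = omegaCocycle z z' • ((W z').comp (W z)))
    (c : G × PontryaginDual G → G × PontryaginDual G → ℂ)
    (hc : ∀ z z', ‖c z z'‖ = 1)
    (hproj : ∀ z z', (W z).comp (W z') = c z z' • W (z * z'))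
    (hirr : ∀ V : Submodule ℂ Hsp, IsClosed (V : Set Hsp) →
      (∀ z, ∀ x ∈ V, W z x ∈ V) → V = ⊥ ∨ V = ⊤)
    (hmax : ∀ z ∉ K, ∃ u ∈ K, omegaCocycle z u ≠ 1)
    (v : Hsp) (hv : ‖v‖ = 1) (hinv : ∀ u ∈ K, W u v = v) :
    ∀ z z', ‖inner ℂ (W z v) (W z' v)‖ = if z / z' ∈ K then 1 else 0 := by
  -- W z preserves inner products
  have hinner : ∀ z (x y : Hsp), (inner ℂ (W z x) (W z y) : ℂ) = inner ℂ x y := by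
    intro z x y
    have h1 : adjoint (W z) (W z y) = y := by
      have h := (hWunit z).1
      have : ((adjoint (W z)).comp (W z)) y = (1 : Hsp →L[ℂ] Hsp) y := by rw [h]
      simpa using this
    calc (inner ℂ (W z x) (W z y) : ℂ) = inner ℂ x (adjoint (W z) (W z y)) :=
          (adjoint_inner_right (W z) x (W z y)).symm
      _ = inner ℂ x y := by rw [h1]
  have hvv : (inner ℂ v v : ℂ) = 1 := by
    rw [inner_self_eq_norm_sq_to_K, hv]; norm_num
  have hWvv : ∀ w, (inner ℂ (W w v) (W w v) : ℂ) = 1 := fun w => by rw [hinner]; exact hvv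
  have hWne : ∀ w, W w v ≠ 0 := by
    intro w h
    have := hWvv w
    rw [h, inner_zero_left] at this
    exact one_ne_zero this.symm
  have habsne : ∀ z u : G × PontryaginDual G, omegaCocycle z u ≠ 0 := by
    intro z u h
    have := omegaCocycle_abs z u
    rw [h, norm_zero] at this; exact one_ne_zero this.symm
  have hcne : ∀ z u : G × PontryaginDual G, c z u ≠ 0 := by
    intro z u h
    have := hc z u
    rw [h, norm_zero] at this; exact one_ne_zero this.symm
  intro z z'
  by_cases hmem : z / z' ∈ K
  · rw [if_pos hmem]
    set u := z / z' with hu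
    have hzu : u * z' = z := by rw [hu]; exact div_mul_cancel z z'
    have hWu : W u v = v := hinv u hmem
    -- c u z' • W z v = ω(u,z') • W z' v
    have e1 : c u z' • W z v = omegaCocycle u z' • W z' v := by
      have A := congrArg (fun T : Hsp →L[ℂ] Hsp => T v) (hproj u z')
      have B := congrArg (fun T : Hsp →L[ℂ] Hsp => T v) (hcomm u z')
      simp only [comp_apply, smul_apply] at A B
      rw [hzu] at A
      rw [← A, B, hWu]
    have e2 : W z v = ((c u z')⁻¹ * omegaCocycle u z') • W z' v := by
      rw [mul_smul, ← e1, inv_smul_smul₀ (hcne u z')]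
    rw [e2, inner_smul_left, hWvv, mul_one, Complex.norm_conj, norm_mul, norm_inv, hc,
      omegaCocycle_abs]
    norm_num
  · rw [if_neg hmem]
    obtain ⟨u, huK, hω⟩ := hmax _ hmem
    have hWu : W u v = v := hinv u huK
    set a : ℂ := inner ℂ (W z v) (W z' v) with ha
    -- relation c w u = ω(w,u) * c u w
    have hrel : ∀ w, c w u = omegaCocycle w u * c u w := by
      intro w
      have A := congrArg (fun T : Hsp →L[ℂ] Hsp => T v) (hproj w u)
      have B := congrArg (fun T : Hsp →L[ℂ] Hsp => T v) (hcomm w u)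
      have C := congrArg (fun T : Hsp →L[ℂ] Hsp => T v) (hproj u w)
      simp only [comp_apply, smul_apply] at A B C
      rw [C, mul_comm u w] at B
      rw [A, smul_smul] at B
      exact smul_left_injective ℂ (hWne (w * u)) B
    -- expansions of W z v
    have ez : ∀ w, W w v = c w u • W (w * u) v := by
      intro w
      have A := congrArg (fun T : Hsp →L[ℂ] Hsp => T v) (hproj w u)
      simp only [comp_apply, smul_apply] at A
      rw [hWu] at A
      exact A
    have ez2 : ∀ w, W u (W w v) = c u w • W (w * u) v := by
      intro w
      have C := congrArg (fun T : Hsp →L[ℂ] Hsp => T v) (hproj u w)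
      simp only [comp_apply, smul_apply] at C
      rw [C, mul_comm u w]
    set b : ℂ := inner ℂ (W (z * u) v) (W (z' * u) v) with hb
    have eq1 : a = (starRingEnd ℂ) (c z u) * c z' u * b := by
      rw [ha, ez z, ez z', inner_smul_left, inner_smul_right, hb]; ring
    have eq2 : a = (starRingEnd ℂ) (c u z) * c u z' * b := by
      have : (inner ℂ (W u (W z v)) (W u (W z' v)) : ℂ) = a := by rw [hinner, ha]
      rw [ez2 z, ez2 z', inner_smul_left, inner_smul_right, ← hb] at this
      rw [← this]; ring
    -- a = q * a with q ≠ 1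
    have hq : a = ((starRingEnd ℂ) (omegaCocycle z u) * omegaCocycle z' u) * a := by
      calc a = (starRingEnd ℂ) (c z u) * c z' u * b := eq1
        _ = ((starRingEnd ℂ) (omegaCocycle z u) * omegaCocycle z' u) *
            ((starRingEnd ℂ) (c u z) * c u z' * b) := by
              rw [hrel z, hrel z', map_mul]; ring
        _ = ((starRingEnd ℂ) (omegaCocycle z u) * omegaCocycle z' u) * a := by rw [← eq2]
    have hqne : (starRingEnd ℂ) (omegaCocycle z u) * omegaCocycle z' u ≠ 1 := by
      intro h
      apply hω
      have hconj : (starRingEnd ℂ) (omegaCocycle z u) * omegaCocycle z u = 1 := by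
        rw [mul_comm, Complex.mul_conj, Complex.normSq_eq_norm_sq, omegaCocycle_abs]; norm_num
      have hconjne : (starRingEnd ℂ) (omegaCocycle z u) ≠ 0 := by
        intro h0; rw [h0, zero_mul] at hconj; exact one_ne_zero hconj.symm
      have heq : omegaCocycle z' u = omegaCocycle z u :=
        mul_left_cancel₀ hconjne (h.trans hconj.symm)
      have hsplit : omegaCocycle (z / z') u * omegaCocycle z' u = 1 * omegaCocycle z' u := by
        rw [← omegaCocycle_mul, div_mul_cancel z z', heq, one_mul]
      exact mul_right_cancel₀ (habsne z' u) hsplit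
    have : ((starRingEnd ℂ) (omegaCocycle z u) * omegaCocycle z' u - 1) * a = 0 := by
      rw [sub_mul, one_mul, ← hq, sub_self]
    rcases mul_eq_zero.1 this with h | h
    · exact absurd (sub_eq_zero.1 h) hqne
    · rw [h, norm_zero]
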